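/- For every integer p ≥ 4, let D be the smallest three-dimensional Ferrers diagram containing the lattice points (1,2,p−1), (2,3,p−2), (3,4,p−3), ..., (p−1,p,1), (p,1,2) and (2,1,p−1), (3,2,p−2), (4,3,p−3), ..., (p,p−1,1), (1,p,2). Then the minimal generating set of the toric ideal J_D contains a binomial of degree p. -/

import Mathlib

open MvPolynomial Filter

noncomputable section


/-- The Hilbert function of the standard graded quotient of a polynomial ring
by an ideal `I`: the `K`-dimension of the image of the space of homogeneous
polynomials of degree `k` in the quotient. -/
def hilbertFn {σ : Type} (K : Type) [Field K] (I : Ideal (MvPolynomial σ K)) (k : ℕ) : ℕ :=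
  Module.finrank K
    ((MvPolynomial.homogeneousSubmodule σ K k).map (Ideal.Quotient.mkₐ K I).toLinearMap)

/-- `e` is the multiplicity of a graded module with Hilbert function `H`:
for `k ≫ 0`, `H k` agrees with a polynomial whose leading coefficient is
`e/(d-1)!`, where `d - 1` is its degree. -/
def IsMultiplicityOf (H : ℕ → ℕ) (e : ℕ) : Prop :=
  ∃ p : Polynomial ℚ, (∀ᶠ k in atTop, (H k : ℚ) = p.eval (k : ℚ)) ∧
    p.leadingCoeff * (Nat.factorial p.natDegree : ℚ) = (e : ℚ)

/-- `d` is the dimension of a graded module with Hilbert function `H`: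
for `k ≫ 0`, `H k` agrees with a polynomial of degree `d - 1`. -/
def IsHilbDimOf (H : ℕ → ℕ) (d : ℕ) : Prop :=
  ∃ p : Polynomial ℚ, (∀ᶠ k in atTop, (H k : ℚ) = p.eval (k : ℚ)) ∧
    ((p = 0 ∧ d = 0) ∨ (p ≠ 0 ∧ d = p.natDegree + 1))

/-- The irrelevant (graded maximal) ideal of a polynomial ring. -/
def mvIrrelevant (σ : Type) (K : Type) [Field K] : Ideal (MvPolynomial σ K) :=
  Ideal.span (Set.range (X : σ → MvPolynomial σ K))

/-- An ideal of a polynomial ring is homogeneous (graded) if it contains all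
homogeneous components of its elements. -/
def IdealIsHomog {σ : Type} {K : Type} [Field K] (I : Ideal (MvPolynomial σ K)) : Prop :=
  ∀ f ∈ I, ∀ n : ℕ, MvPolynomial.homogeneousComponent n f ∈ I

/-- `β` is the table of graded Betti numbers of `S/I`, i.e. there is a minimal
graded free resolution `⋯ → F₁ → F₀ → S/I → 0` in which
`F i = ⊕_j S(-j)^(β i j)`.  The `i`-th free module is realized as
`(Σ j, Fin (β i j)) →₀ S`, the basis element `⟨j, t⟩` having internal degree `j`;
a map of graded free modules is graded precisely when the `⟨j', t'⟩`-coordinate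
of the image of the basis element `⟨j, t⟩` is homogeneous of degree `j - j'`
(and vanishes when `j' > j`), and minimality means that all differentials have
image inside the irrelevant ideal times the free module. -/
def IsBettiTableOf {σ : Type} (K : Type) [Field K] (I : Ideal (MvPolynomial σ K))
    (β : ℕ → ℕ → ℕ) : Prop :=
  {q : ℕ × ℕ | β q.1 q.2 ≠ 0}.Finite ∧
  ∃ (d : (i : ℕ) →
      ((Σ j : ℕ, Fin (β (i + 1) j)) →₀ MvPolynomial σ K) →ₗ[MvPolynomial σ K]
        ((Σ j : ℕ, Fin (β i j)) →₀ MvPolynomial σ K))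
    (ε : ((Σ j : ℕ, Fin (β 0 j)) →₀ MvPolynomial σ K) →ₗ[MvPolynomial σ K]
        (MvPolynomial σ K ⧸ I)),
    Function.Surjective ε ∧
    LinearMap.ker ε = LinearMap.range (d 0) ∧
    (∀ i, LinearMap.ker (d i) = LinearMap.range (d (i + 1))) ∧
    (∀ i, LinearMap.range (d i) ≤
      (mvIrrelevant σ K) • (⊤ : Submodule (MvPolynomial σ K)
        ((Σ j : ℕ, Fin (β i j)) →₀ MvPolynomial σ K))) ∧
    (∀ (i j j' : ℕ) (t : Fin (β (i + 1) j)) (t' : Fin (β i j')),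
      (d i (Finsupp.single ⟨j, t⟩ 1)) ⟨j', t'⟩ ∈
          MvPolynomial.homogeneousSubmodule σ K (j - j') ∧
        (j < j' → (d i (Finsupp.single ⟨j, t⟩ 1)) ⟨j', t'⟩ = 0)) ∧
    (∀ (j : ℕ) (t : Fin (β 0 j)), ∃ g ∈ MvPolynomial.homogeneousSubmodule σ K j,
      ε (Finsupp.single ⟨j, t⟩ 1) = Ideal.Quotient.mk I g)

/-- The Castelnuovo–Mumford regularity `max {j - i : β i j ≠ 0}` encoded by a
Betti table. -/
def regOfBetti (β : ℕ → ℕ → ℕ) : ℕ :=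
  sSup {r : ℕ | ∃ i j, β i j ≠ 0 ∧ j = i + r}

set_option synthInstance.maxHeartbeats 1000000 in
/-- The quotient of a polynomial ring by a (homogeneous) ideal is
Cohen–Macaulay: there is a regular sequence, inside the graded maximal ideal,
whose length is the Krull dimension of the quotient. -/
def QuotIsCM {σ : Type} (K : Type) [Field K] (I : Ideal (MvPolynomial σ K)) : Prop :=
  ∃ rs : List (MvPolynomial σ K ⧸ I),
    (∀ x ∈ rs, x ∈ Ideal.map (Ideal.Quotient.mk I) (mvIrrelevant σ K)) ∧
    RingTheory.Sequence.IsRegular (MvPolynomial σ K ⧸ I) rs ∧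
    (rs.length : WithBot (WithTop ℕ)) = ringKrullDim (MvPolynomial σ K ⧸ I)

/-- The Hilbert function of the special fiber ring `F(I) = ⊕_l I^l/m I^l`:
`l ↦ dim_K I^l / m I^l`. -/
def fiberHilbert {σ : Type} (K : Type) [Field K] (I : Ideal (MvPolynomial σ K)) (l : ℕ) : ℕ :=
  Module.finrank K
    ((Submodule.restrictScalars K ((I ^ l : Ideal (MvPolynomial σ K)) :
        Submodule (MvPolynomial σ K) (MvPolynomial σ K))) ⧸
      (Submodule.comap
        (Submodule.restrictScalars K ((I ^ l : Ideal (MvPolynomial σ K)) :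
          Submodule (MvPolynomial σ K) (MvPolynomial σ K))).subtype
        (Submodule.restrictScalars K (((mvIrrelevant σ K * I ^ l : Ideal (MvPolynomial σ K)) :
          Submodule (MvPolynomial σ K) (MvPolynomial σ K))))))

/-- A monomial order on the exponent vectors: a strict total order compatible
with addition for which `0` is the least element. -/
structure IsMonomialOrder {σ : Type} (lt : (σ →₀ ℕ) → (σ →₀ ℕ) → Prop) : Prop where
  irrefl : ∀ a, ¬ lt a a
  trans : ∀ a b c, lt a b → lt b c → lt a c
  total : ∀ a b, a ≠ b → lt a b ∨ lt b a
  add_right : ∀ a b c, lt a b → lt (a + c) (b + c)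
  zero_lt : ∀ a, a ≠ 0 → lt 0 a

/-- The initial ideal of `J` with respect to a monomial order `lt`: the ideal
generated by the leading monomials of the elements of `J`. -/
def initialIdeal {σ : Type} (K : Type) [Field K] (lt : (σ →₀ ℕ) → (σ →₀ ℕ) → Prop)
    (J : Ideal (MvPolynomial σ K)) : Ideal (MvPolynomial σ K) :=
  Ideal.span {m : MvPolynomial σ K | ∃ f ∈ J, ∃ a ∈ f.support,
    (∀ b ∈ f.support, b = a ∨ lt b a) ∧ m = MvPolynomial.monomial a (1 : K)}



/-- The set of first coordinates occurring in the diagram. -/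
def xsOf (D : Finset (ℕ × ℕ × ℕ)) : Finset ℕ := D.image (fun u => u.1)

/-- The set of second coordinates occurring in the diagram. -/
def ysOf (D : Finset (ℕ × ℕ × ℕ)) : Finset ℕ := D.image (fun u => u.2.1)

/-- The set of third coordinates occurring in the diagram. -/
def zsOf (D : Finset (ℕ × ℕ × ℕ)) : Finset ℕ := D.image (fun u => u.2.2)

/-- The essential length of a diagram. -/
def aOf (D : Finset (ℕ × ℕ × ℕ)) : ℕ := (xsOf D).card

/-- The essential width of a diagram. -/
def bOf (D : Finset (ℕ × ℕ × ℕ)) : ℕ := (ysOf D).card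

/-- The essential height of a diagram. -/
def cOf (D : Finset (ℕ × ℕ × ℕ)) : ℕ := (zsOf D).card

/-- A nonempty finite set of lattice points in `ℤ₊³` that is closed under
coordinatewise decrease (within `ℤ₊³`). -/
def IsFerrers (D : Finset (ℕ × ℕ × ℕ)) : Prop :=
  D.Nonempty ∧ (∀ u ∈ D, 1 ≤ u.1 ∧ 1 ≤ u.2.1 ∧ 1 ≤ u.2.2) ∧
    ∀ u ∈ D, ∀ i j k : ℕ, 1 ≤ i → i ≤ u.1 → 1 ≤ j → j ≤ u.2.1 → 1 ≤ k → k ≤ u.2.2 →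
      (i, j, k) ∈ D

/-- The projection property for a three-dimensional Ferrers diagram. -/
def HasProjProp (D : Finset (ℕ × ℕ × ℕ)) : Prop :=
  ∀ i : ℕ, 1 ≤ i → ∀ j₁ k₁ j₂ k₂ : ℕ,
    (i + 1, j₁, k₁) ∈ D → (i + 1, j₂, k₂) ∈ D → (i, j₁, k₂) ∈ D

/-- The `x = i` layer of a diagram. -/
def layerOf (D : Finset (ℕ × ℕ × ℕ)) (i : ℕ) : Finset (ℕ × ℕ × ℕ) :=
  D.filter (fun u => u.1 = i)

/-- The strong projection property for a three-dimensional Ferrers diagram. -/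
def HasStrongProjProp (D : Finset (ℕ × ℕ × ℕ)) : Prop :=
  ∀ i : ℕ, 1 ≤ i → i + 1 ≤ aOf D →
    (bOf (layerOf D (i + 1)) = 1 ∨ (i, bOf (layerOf D (i + 1)), cOf (layerOf D i)) ∈ D) ∧
    (cOf (layerOf D (i + 1)) = 1 ∨ (i, bOf (layerOf D i), cOf (layerOf D (i + 1))) ∈ D)

/-- The monomial `x_i y_j z_k` associated to the point `u = (i,j,k)` of `D`,
in the polynomial ring whose variables are indexed by the coordinates
occurring in `D`. -/
def ptMonomial (K : Type) [Field K] (D : Finset (ℕ × ℕ × ℕ)) (u : ↥D) :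
    MvPolynomial (↥(xsOf D) ⊕ ↥(ysOf D) ⊕ ↥(zsOf D)) K :=
  X (Sum.inl ⟨u.1.1, Finset.mem_image_of_mem _ u.2⟩) *
    X (Sum.inr (Sum.inl ⟨u.1.2.1, Finset.mem_image_of_mem _ u.2⟩)) *
    X (Sum.inr (Sum.inr ⟨u.1.2.2, Finset.mem_image_of_mem _ u.2⟩))

/-- The defining (monomial) ideal `I_D = (x_i y_j z_k : (i,j,k) ∈ D)`. -/
def defIdeal (K : Type) [Field K] (D : Finset (ℕ × ℕ × ℕ)) :
    Ideal (MvPolynomial (↥(xsOf D) ⊕ ↥(ysOf D) ⊕ ↥(zsOf D)) K) :=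
  Ideal.span (Set.range (ptMonomial K D))

/-- The presentation `K[T_D] → K[x,y,z]`, `T_{(i,j,k)} ↦ x_i y_j z_k`, of the
toric ring of `I_D`. -/
def toricMap (K : Type) [Field K] (D : Finset (ℕ × ℕ × ℕ)) :
    MvPolynomial (↥D) K →ₐ[K] MvPolynomial (↥(xsOf D) ⊕ ↥(ysOf D) ⊕ ↥(zsOf D)) K :=
  MvPolynomial.aeval (ptMonomial K D)

/-- The toric ideal (special fiber ideal) `J_D = ker (T_{(i,j,k)} ↦ x_i y_j z_k)`. -/
def toricIdeal (K : Type) [Field K] (D : Finset (ℕ × ℕ × ℕ)) : Ideal (MvPolynomial (↥D) K) :=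
  RingHom.ker (toricMap K D)

/-- The (strict) lexicographic order on lattice points. -/
def ptLT (u v : ℕ × ℕ × ℕ) : Prop :=
  u.1 < v.1 ∨ (u.1 = v.1 ∧ (u.2.1 < v.2.1 ∨ (u.2.1 = v.2.1 ∧ u.2.2 < v.2.2)))

/-- The lexicographic order on monomials (exponent vectors) of `K[T_D]`, where
the variables `T_u` are ordered by the lexicographic order on the points of
`D` (`T_u > T_v` when `u` lexicographically precedes `v`). -/
def expLexLT {D : Finset (ℕ × ℕ × ℕ)} (a b : ↥D →₀ ℕ) : Prop :=
  ∃ u : ↥D, (∀ v : ↥D, ptLT v.1 u.1 → a v = b v) ∧ a u < b u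

/-- The initial ideal of the toric ideal `J_D` with respect to the
lexicographic order: the ideal generated by all lexicographically leading
monomials of elements of `J_D`. -/
def lexInitialIdeal (K : Type) [Field K] (D : Finset (ℕ × ℕ × ℕ)) :
    Ideal (MvPolynomial (↥D) K) :=
  Ideal.span {m : MvPolynomial (↥D) K | ∃ f ∈ toricIdeal K D, ∃ a ∈ f.support,
    (∀ b ∈ f.support, b = a ∨ expLexLT b a) ∧ m = MvPolynomial.monomial a (1 : K)}

/-- The Stanley–Reisner simplicial complex `Δ(D)` associated to the squarefree
lexicographic initial ideal of `J_D`: the faces are the subsets `F` of `D`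
whose squarefree monomial does not lie in the initial ideal. -/
def srComplex (K : Type) [Field K] (D : Finset (ℕ × ℕ × ℕ)) : Set (Finset ↥D) :=
  {F : Finset ↥D |
    MvPolynomial.monomial (∑ u ∈ F, Finsupp.single u 1) (1 : K) ∉ lexInitialIdeal K D}


/-- The set of extremal lattice points governing the diagram of STATEMENT 17. -/
def extremalPts (p : ℕ) : Finset (ℕ × ℕ × ℕ) :=
  ((Finset.Icc 1 (p - 1)).image (fun t => (t, t + 1, p - t))) ∪
    ((Finset.Icc 1 (p - 1)).image (fun t => (t + 1, t, p - t))) ∪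
    {(p, 1, 2), (1, p, 2)}

open Classical in
/-- The smallest three-dimensional Ferrers diagram containing the extremal
points: the coordinatewise-decrease closure of `extremalPts p` in `ℤ₊³`. -/
def govDiagram (p : ℕ) : Finset (ℕ × ℕ × ℕ) :=
  (Finset.Icc 1 p ×ˢ Finset.Icc 1 p ×ˢ Finset.Icc 1 p).filter
    (fun u => ∃ v ∈ extremalPts p, u.1 ≤ v.1 ∧ u.2.1 ≤ v.2.1 ∧ u.2.2 ≤ v.2.2)



-- ## Auxiliary development for STATEMENT 17

/-- The maximal allowed height over position (t,j). -/
def Kfun (p t j : ℕ) : ℕ :=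
  if t = j then p - t
  else if (t = 1 ∧ j = p) ∨ (t = p ∧ j = 1) then 2
  else p + 1 - max t j

lemma mem_extremalPts {p : ℕ} {v : ℕ × ℕ × ℕ} :
    v ∈ extremalPts p ↔
      (∃ s, 1 ≤ s ∧ s ≤ p - 1 ∧ v = (s, s + 1, p - s)) ∨
      (∃ s, 1 ≤ s ∧ s ≤ p - 1 ∧ v = (s + 1, s, p - s)) ∨
      v = (p, 1, 2) ∨ v = (1, p, 2) := by
  simp only [extremalPts, Finset.mem_union, Finset.mem_image, Finset.mem_Icc,
    Finset.mem_insert, Finset.mem_singleton]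
  constructor
  · rintro ((⟨s, ⟨h1, h2⟩, rfl⟩ | ⟨s, ⟨h1, h2⟩, rfl⟩) | (h | h))
    · exact Or.inl ⟨s, h1, h2, rfl⟩
    · exact Or.inr (Or.inl ⟨s, h1, h2, rfl⟩)
    · exact Or.inr (Or.inr (Or.inl h))
    · exact Or.inr (Or.inr (Or.inr h))
  · rintro (⟨s, h1, h2, rfl⟩ | ⟨s, h1, h2, rfl⟩ | h | h)
    · exact Or.inl (Or.inl ⟨s, ⟨h1, h2⟩, rfl⟩)
    · exact Or.inl (Or.inr ⟨s, ⟨h1, h2⟩, rfl⟩)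
    · exact Or.inr (Or.inl h)
    · exact Or.inr (Or.inr h)


lemma mem_govDiagram {p : ℕ} (hp : 4 ≤ p) {t j k : ℕ} :
    (t, j, k) ∈ govDiagram p ↔
      1 ≤ t ∧ t ≤ p ∧ 1 ≤ j ∧ j ≤ p ∧ 1 ≤ k ∧ k ≤ Kfun p t j := by
  have hmax : max t j = if t ≤ j then j else t := by
    rcases Nat.le_total t j with h | h
    · rw [Nat.max_eq_right h, if_pos h]
    · rcases Nat.eq_or_lt_of_le h with h' | h'
      · simp [h']
      · rw [Nat.max_eq_left h, if_neg (by omega)]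
  rw [govDiagram, Finset.mem_filter]
  simp only [Finset.mem_product, Finset.mem_Icc]
  constructor
  · rintro ⟨⟨⟨ht1, ht2⟩, ⟨hj1, hj2⟩, ⟨hk1, hk2⟩⟩, v, hv, hd1, hd2, hd3⟩
    refine ⟨ht1, ht2, hj1, hj2, hk1, ?_⟩
    rw [mem_extremalPts] at hv
    unfold Kfun
    rw [hmax]
    rcases hv with ⟨s, hs1, hs2, rfl⟩ | ⟨s, hs1, hs2, rfl⟩ | rfl | rfl <;>
      dsimp only at hd1 hd2 hd3 <;>
      split_ifs <;> omega
  · rintro ⟨ht1, ht2, hj1, hj2, hk1, hk2⟩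
    have hkp : k ≤ p := by unfold Kfun at hk2; split_ifs at hk2 <;> omega
    refine ⟨⟨⟨ht1, ht2⟩, ⟨hj1, hj2⟩, ⟨hk1, hkp⟩⟩, ?_⟩
    unfold Kfun at hk2
    rw [hmax] at hk2
    by_cases h1 : t = j
    · rw [if_pos h1] at hk2
      subst h1
      exact ⟨(t, t + 1, p - t), mem_extremalPts.2 (Or.inl ⟨t, ht1, by omega, rfl⟩),
        by dsimp only; omega, by dsimp only; omega, by dsimp only; omega⟩
    · rw [if_neg h1] at hk2
      by_cases h2 : (t = 1 ∧ j = p) ∨ (t = p ∧ j = 1)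
      · rw [if_pos h2] at hk2
        rcases h2 with ⟨h3, h4⟩ | ⟨h3, h4⟩
        · exact ⟨(1, p, 2), mem_extremalPts.2 (Or.inr (Or.inr (Or.inr rfl))),
            by dsimp only; omega, by dsimp only; omega, by dsimp only; omega⟩
        · exact ⟨(p, 1, 2), mem_extremalPts.2 (Or.inr (Or.inr (Or.inl rfl))),
            by dsimp only; omega, by dsimp only; omega, by dsimp only; omega⟩
      · rw [if_neg h2] at hk2
        split_ifs at hk2 with h3
        · refine ⟨(j - 1, j, p - (j - 1)),
            mem_extremalPts.2 (Or.inl ⟨j - 1, by omega, by omega, ?_⟩),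
            by dsimp only; omega, by dsimp only; omega, by dsimp only; omega⟩
          rw [Prod.ext_iff, Prod.ext_iff]
          refine ⟨rfl, by dsimp only; omega, rfl⟩
        · refine ⟨(t, t - 1, p - (t - 1)),
            mem_extremalPts.2 (Or.inr (Or.inl ⟨t - 1, by omega, by omega, ?_⟩)),
            by dsimp only; omega, by dsimp only; omega, by dsimp only; omega⟩
          rw [Prod.ext_iff, Prod.ext_iff]
          refine ⟨by dsimp only; omega, rfl, rfl⟩

section Mu
variable {K : Type} [Field K] (D : Finset (ℕ × ℕ × ℕ))

/-- exponent vector of the monomial attached to a point -/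
def wOf (u : ↥D) : (↥(xsOf D) ⊕ ↥(ysOf D) ⊕ ↥(zsOf D)) →₀ ℕ :=
  Finsupp.single (Sum.inl ⟨u.1.1, Finset.mem_image_of_mem _ u.2⟩) 1 +
    Finsupp.single (Sum.inr (Sum.inl ⟨u.1.2.1, Finset.mem_image_of_mem _ u.2⟩)) 1 +
    Finsupp.single (Sum.inr (Sum.inr ⟨u.1.2.2, Finset.mem_image_of_mem _ u.2⟩)) 1

lemma ptMonomial_eq (K : Type) [Field K] (u : ↥D) :
    ptMonomial K D u = monomial (wOf D u) (1 : K) := by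
  rw [ptMonomial, wOf, X, X, X, monomial_mul, monomial_mul, one_mul, one_mul]

/-- The multidegree map. -/
def muOf (C : ↥D →₀ ℕ) : (↥(xsOf D) ⊕ ↥(ysOf D) ⊕ ↥(zsOf D)) →₀ ℕ :=
  C.sum (fun u n => n • wOf D u)

lemma muOf_add (C₁ C₂ : ↥D →₀ ℕ) : muOf D (C₁ + C₂) = muOf D C₁ + muOf D C₂ :=
  Finsupp.sum_add_index' (fun u => zero_smul ℕ (wOf D u)) (fun u m n => add_smul m n (wOf D u))

lemma toricMap_monomial (K : Type) [Field K] (C : ↥D →₀ ℕ) (c : K) :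
    toricMap K D (monomial C c) = monomial (muOf D C) c := by
  rw [toricMap, aeval_monomial]
  have h : (C.prod fun u e => ptMonomial K D u ^ e) = monomial (muOf D C) (1 : K) := by
    rw [muOf, Finsupp.prod, Finsupp.sum]
    induction C.support using Finset.induction_on with
    | empty => simp
    | insert _ _ hx ih =>
        rw [Finset.prod_insert hx, Finset.sum_insert hx, ih, ptMonomial_eq, monomial_pow,
          monomial_mul, one_pow, one_mul]
  rw [h, algebraMap_eq, C_mul_monomial, mul_one]
end Mu

section Eval
variable {D : Finset (ℕ × ℕ × ℕ)}
open Finsupp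

lemma wOf_apply_inl (u : ↥D) (a : ↥(xsOf D)) :
    wOf D u (Sum.inl a) = if u.1.1 = a.1 then 1 else 0 := by
  obtain ⟨av, ha⟩ := a
  simp [wOf, Finsupp.single_apply]
  exact if_congr Subtype.ext_iff rfl rfl

lemma wOf_apply_inrl (u : ↥D) (a : ↥(ysOf D)) :
    wOf D u (Sum.inr (Sum.inl a)) = if u.1.2.1 = a.1 then 1 else 0 := by
  obtain ⟨av, ha⟩ := a
  simp [wOf, Finsupp.single_apply]
  exact if_congr Subtype.ext_iff rfl rfl

lemma wOf_apply_inrr (u : ↥D) (a : ↥(zsOf D)) :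
    wOf D u (Sum.inr (Sum.inr a)) = if u.1.2.2 = a.1 then 1 else 0 := by
  obtain ⟨av, ha⟩ := a
  simp [wOf, Finsupp.single_apply]
  exact if_congr Subtype.ext_iff rfl rfl
lemma muOf_apply_gen (C : ↥D →₀ ℕ) (a) (g : ↥D → ℕ → ℕ)
    (hg : ∀ u n, n • wOf D u a = g u n) (hg0 : ∀ u, g u 0 = 0) :
    muOf D C a = ∑ u : ↥D, g u (C u) := by
  classical
  rw [muOf, Finsupp.sum_apply, Finsupp.sum]
  rw [show (∑ u ∈ C.support, (C u • wOf D u) a) = ∑ u ∈ C.support, g u (C u) from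
    Finset.sum_congr rfl fun u _ => hg u (C u)]
  apply Finset.sum_subset (Finset.subset_univ _)
  intro u _ hu
  rw [Finsupp.notMem_support_iff.mp hu, hg0]

lemma muOf_apply_inl (C : ↥D →₀ ℕ) (a : ↥(xsOf D)) :
    muOf D C (Sum.inl a) = ∑ u : ↥D, (if u.1.1 = a.1 then C u else 0) := by
  classical
  refine muOf_apply_gen C _ (fun u n => if u.1.1 = a.1 then n else 0) (fun u n => ?_) (fun u => by simp)
  rw [smul_eq_mul, wOf_apply_inl]
  split_ifs <;> omega

lemma muOf_apply_inrl (C : ↥D →₀ ℕ) (a : ↥(ysOf D)) :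
    muOf D C (Sum.inr (Sum.inl a)) = ∑ u : ↥D, (if u.1.2.1 = a.1 then C u else 0) := by
  classical
  refine muOf_apply_gen C _ (fun u n => if u.1.2.1 = a.1 then n else 0) (fun u n => ?_) (fun u => by simp)
  rw [smul_eq_mul, wOf_apply_inrl]
  split_ifs <;> omega

lemma muOf_apply_inrr (C : ↥D →₀ ℕ) (a : ↥(zsOf D)) :
    muOf D C (Sum.inr (Sum.inr a)) = ∑ u : ↥D, (if u.1.2.2 = a.1 then C u else 0) := by
  classical
  refine muOf_apply_gen C _ (fun u n => if u.1.2.2 = a.1 then n else 0) (fun u n => ?_) (fun u => by simp)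
  rw [smul_eq_mul, wOf_apply_inrr]
  split_ifs <;> omega

/-- equality of multidegrees is equivalent to equality of all coordinate level sums -/
lemma muOf_eq_iff (C C' : ↥D →₀ ℕ) :
    muOf D C = muOf D C' ↔
      (∀ a : ↥(xsOf D), (∑ u : ↥D, if u.1.1 = a.1 then C u else 0) =
          ∑ u : ↥D, if u.1.1 = a.1 then C' u else 0) ∧
      (∀ a : ↥(ysOf D), (∑ u : ↥D, if u.1.2.1 = a.1 then C u else 0) =
          ∑ u : ↥D, if u.1.2.1 = a.1 then C' u else 0) ∧
      (∀ a : ↥(zsOf D), (∑ u : ↥D, if u.1.2.2 = a.1 then C u else 0) =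
          ∑ u : ↥D, if u.1.2.2 = a.1 then C' u else 0) := by
  constructor
  · intro h
    refine ⟨fun a => ?_, fun a => ?_, fun a => ?_⟩
    · rw [← muOf_apply_inl, ← muOf_apply_inl, h]
    · rw [← muOf_apply_inrl, ← muOf_apply_inrl, h]
    · rw [← muOf_apply_inrr, ← muOf_apply_inrr, h]
  · rintro ⟨h1, h2, h3⟩
    ext a
    rcases a with a | a | a
    · rw [muOf_apply_inl, muOf_apply_inl]; exact h1 a
    · rw [muOf_apply_inrl, muOf_apply_inrl]; exact h2 a
    · rw [muOf_apply_inrr, muOf_apply_inrr]; exact h3 a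
end Eval

section AB
open Classical
variable (p : ℕ)

def Apt (i : ℕ) : ℕ × ℕ × ℕ := if i = p then (p, 1, 2) else (i, i + 1, p - i)
def Bpt (i : ℕ) : ℕ × ℕ × ℕ := if i = 1 then (1, p, 2) else (i, i - 1, p + 1 - i)

variable (hp : 4 ≤ p)

lemma Apt_fst (i : ℕ) : (Apt p i).1 = i := by
  unfold Apt
  split_ifs with h
  · rw [h]
  · rfl

lemma Bpt_fst (i : ℕ) : (Bpt p i).1 = i := by
  unfold Bpt
  split_ifs with h
  · rw [h]
  · rfl

include hp in
lemma Apt_mem {i : ℕ} (h1 : 1 ≤ i) (h2 : i ≤ p) : Apt p i ∈ govDiagram p := by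
  unfold Apt
  split_ifs with h
  · rw [mem_govDiagram hp]
    refine ⟨by omega, le_refl p, by omega, by omega, by omega, ?_⟩
    unfold Kfun
    rw [if_neg (by omega), if_pos (by omega)]
  · rw [mem_govDiagram hp]
    refine ⟨h1, by omega, by omega, by omega, by omega, ?_⟩
    unfold Kfun
    rw [if_neg (by omega), if_neg (by omega), Nat.max_eq_right (by omega)]
    omega

include hp in
lemma Bpt_mem {i : ℕ} (h1 : 1 ≤ i) (h2 : i ≤ p) : Bpt p i ∈ govDiagram p := by
  unfold Bpt
  split_ifs with h
  · rw [mem_govDiagram hp]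
    refine ⟨by omega, by omega, by omega, le_refl p, by omega, ?_⟩
    unfold Kfun
    rw [if_neg (by omega), if_pos (by omega)]
  · rw [mem_govDiagram hp]
    refine ⟨h1, h2, by omega, by omega, by omega, ?_⟩
    unfold Kfun
    rw [if_neg (by omega), if_neg (by omega), Nat.max_eq_left (by omega)]

/-- The first fiber element. -/
def AF : ↥(govDiagram p) →₀ ℕ :=
  Finsupp.equivFunOnFinite.symm (fun u => if u.1 = Apt p u.1.1 then 1 else 0)

/-- The second fiber element. -/
def BF : ↥(govDiagram p) →₀ ℕ :=
  Finsupp.equivFunOnFinite.symm (fun u => if u.1 = Bpt p u.1.1 then 1 else 0)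

lemma AF_apply (u : ↥(govDiagram p)) : AF p u = if u.1 = Apt p u.1.1 then 1 else 0 :=
  congrFun (Finsupp.equivFunOnFinite.apply_symm_apply
    (fun u : ↥(govDiagram p) => if u.1 = Apt p u.1.1 then 1 else 0)) u

lemma BF_apply (u : ↥(govDiagram p)) : BF p u = if u.1 = Bpt p u.1.1 then 1 else 0 :=
  congrFun (Finsupp.equivFunOnFinite.apply_symm_apply
    (fun u : ↥(govDiagram p) => if u.1 = Bpt p u.1.1 then 1 else 0)) u

lemma coords_bound {u : ℕ × ℕ × ℕ} (hu : u ∈ govDiagram p) (hp : 4 ≤ p) :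
    1 ≤ u.1 ∧ u.1 ≤ p ∧ 1 ≤ u.2.1 ∧ u.2.1 ≤ p ∧ 1 ≤ u.2.2 ∧ u.2.2 ≤ p - 1 := by
  obtain ⟨t, j, k⟩ := u
  dsimp only
  rw [mem_govDiagram hp] at hu
  obtain ⟨h1, h2, h3, h4, h5, h6⟩ := hu
  refine ⟨h1, h2, h3, h4, h5, ?_⟩
  unfold Kfun at h6
  rcases Nat.le_total t j with h | h
  · rw [Nat.max_eq_right h] at h6; split_ifs at h6 <;> omega
  · rw [Nat.max_eq_left h] at h6; split_ifs at h6 <;> omega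
end AB

section Sums
open Classical
variable (p : ℕ)

lemma Apt_snd (i : ℕ) : (Apt p i).2.1 = if i = p then 1 else i + 1 := by
  unfold Apt; split_ifs <;> rfl

lemma Apt_thd (i : ℕ) : (Apt p i).2.2 = if i = p then 2 else p - i := by
  unfold Apt; split_ifs <;> rfl

lemma Bpt_snd (i : ℕ) : (Bpt p i).2.1 = if i = 1 then p else i - 1 := by
  unfold Bpt; split_ifs <;> rfl

lemma Bpt_thd (i : ℕ) : (Bpt p i).2.2 = if i = 1 then 2 else p + 1 - i := by
  unfold Bpt; split_ifs <;> rfl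

/-- multiplicity of z-values in the common multidegree -/
def cnt (v : ℕ) : ℕ := if v = 2 then 2 else if 1 ≤ v ∧ v ≤ p - 1 then 1 else 0

variable (hp : 4 ≤ p)
include hp

lemma sum_indicator_AF (φ : ℕ × ℕ × ℕ → ℕ) (v : ℕ) :
    (∑ u : ↥(govDiagram p), if φ u.1 = v then AF p u else 0) =
      ((Finset.Icc 1 p).filter (fun i => φ (Apt p i) = v)).card := by
  have step1 : (∑ u : ↥(govDiagram p), if φ u.1 = v then AF p u else 0) =
      ∑ u : ↥(govDiagram p), (if u.1 = Apt p u.1.1 ∧ φ u.1 = v then 1 else 0) := by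
    apply Finset.sum_congr rfl
    intro u _
    rw [AF_apply]
    split_ifs <;> tauto
  rw [step1, ← Finset.card_filter]
  apply Finset.card_bij (fun (u : ↥(govDiagram p)) _ => u.1.1)
  · intro u hu
    rw [Finset.mem_filter] at hu ⊢
    obtain ⟨-, h1, h2⟩ := hu
    have hb := coords_bound p u.2 hp
    exact ⟨Finset.mem_Icc.2 ⟨hb.1, hb.2.1⟩, by rw [← h1]; exact h2⟩
  · intro u hu u' hu' h
    rw [Finset.mem_filter] at hu hu'
    exact Subtype.ext (by rw [hu.2.1, hu'.2.1, h])
  · intro i hi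
    rw [Finset.mem_filter, Finset.mem_Icc] at hi
    refine ⟨⟨Apt p i, Apt_mem p hp hi.1.1 hi.1.2⟩, ?_, ?_⟩
    · rw [Finset.mem_filter]
      refine ⟨Finset.mem_univ _, ?_, ?_⟩
      · show Apt p i = Apt p (Apt p i).1
        rw [Apt_fst]
      · show φ (Apt p i) = v
        exact hi.2
    · exact Apt_fst p i

lemma sum_indicator_BF (φ : ℕ × ℕ × ℕ → ℕ) (v : ℕ) :
    (∑ u : ↥(govDiagram p), if φ u.1 = v then BF p u else 0) =
      ((Finset.Icc 1 p).filter (fun i => φ (Bpt p i) = v)).card := by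
  have step1 : (∑ u : ↥(govDiagram p), if φ u.1 = v then BF p u else 0) =
      ∑ u : ↥(govDiagram p), (if u.1 = Bpt p u.1.1 ∧ φ u.1 = v then 1 else 0) := by
    apply Finset.sum_congr rfl
    intro u _
    rw [BF_apply]
    split_ifs <;> tauto
  rw [step1, ← Finset.card_filter]
  apply Finset.card_bij (fun (u : ↥(govDiagram p)) _ => u.1.1)
  · intro u hu
    rw [Finset.mem_filter] at hu ⊢
    obtain ⟨-, h1, h2⟩ := hu
    have hb := coords_bound p u.2 hp
    exact ⟨Finset.mem_Icc.2 ⟨hb.1, hb.2.1⟩, by rw [← h1]; exact h2⟩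
  · intro u hu u' hu' h
    rw [Finset.mem_filter] at hu hu'
    exact Subtype.ext (by rw [hu.2.1, hu'.2.1, h])
  · intro i hi
    rw [Finset.mem_filter, Finset.mem_Icc] at hi
    refine ⟨⟨Bpt p i, Bpt_mem p hp hi.1.1 hi.1.2⟩, ?_, ?_⟩
    · rw [Finset.mem_filter]
      refine ⟨Finset.mem_univ _, ?_, ?_⟩
      · show Bpt p i = Bpt p (Bpt p i).1
        rw [Bpt_fst]
      · show φ (Bpt p i) = v
        exact hi.2
    · exact Bpt_fst p i

lemma AF_sum_x (v : ℕ) :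
    (∑ u : ↥(govDiagram p), if u.1.1 = v then AF p u else 0) =
      if 1 ≤ v ∧ v ≤ p then 1 else 0 := by
  rw [sum_indicator_AF p hp (fun w => w.1) v]
  by_cases hv : 1 ≤ v ∧ v ≤ p
  · rw [if_pos hv]
    have : ((Finset.Icc 1 p).filter (fun i => (Apt p i).1 = v)) = {v} := by
      ext i
      simp only [Finset.mem_filter, Finset.mem_Icc, Finset.mem_singleton, Apt_fst]
      omega
    rw [this, Finset.card_singleton]
  · rw [if_neg hv]
    have : ((Finset.Icc 1 p).filter (fun i => (Apt p i).1 = v)) = ∅ := by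
      ext i
      simp only [Finset.mem_filter, Finset.mem_Icc, Finset.notMem_empty, iff_false, Apt_fst]
      omega
    rw [this, Finset.card_empty]

lemma BF_sum_x (v : ℕ) :
    (∑ u : ↥(govDiagram p), if u.1.1 = v then BF p u else 0) =
      if 1 ≤ v ∧ v ≤ p then 1 else 0 := by
  rw [sum_indicator_BF p hp (fun w => w.1) v]
  by_cases hv : 1 ≤ v ∧ v ≤ p
  · rw [if_pos hv]
    have : ((Finset.Icc 1 p).filter (fun i => (Bpt p i).1 = v)) = {v} := by
      ext i
      simp only [Finset.mem_filter, Finset.mem_Icc, Finset.mem_singleton, Bpt_fst]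
      omega
    rw [this, Finset.card_singleton]
  · rw [if_neg hv]
    have : ((Finset.Icc 1 p).filter (fun i => (Bpt p i).1 = v)) = ∅ := by
      ext i
      simp only [Finset.mem_filter, Finset.mem_Icc, Finset.notMem_empty, iff_false, Bpt_fst]
      omega
    rw [this, Finset.card_empty]

lemma AF_sum_y (v : ℕ) :
    (∑ u : ↥(govDiagram p), if u.1.2.1 = v then AF p u else 0) =
      if 1 ≤ v ∧ v ≤ p then 1 else 0 := by
  rw [sum_indicator_AF p hp (fun w => w.2.1) v]
  by_cases hv : 1 ≤ v ∧ v ≤ p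
  · rw [if_pos hv]
    have : ((Finset.Icc 1 p).filter (fun i => (Apt p i).2.1 = v)) =
        {if v = 1 then p else v - 1} := by
      ext i
      simp only [Finset.mem_filter, Finset.mem_Icc, Finset.mem_singleton, Apt_snd]
      split_ifs <;> omega
    rw [this, Finset.card_singleton]
  · rw [if_neg hv]
    have : ((Finset.Icc 1 p).filter (fun i => (Apt p i).2.1 = v)) = ∅ := by
      ext i
      simp only [Finset.mem_filter, Finset.mem_Icc, Finset.notMem_empty, iff_false, Apt_snd]
      split_ifs <;> omega
    rw [this, Finset.card_empty]

lemma BF_sum_y (v : ℕ) :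
    (∑ u : ↥(govDiagram p), if u.1.2.1 = v then BF p u else 0) =
      if 1 ≤ v ∧ v ≤ p then 1 else 0 := by
  rw [sum_indicator_BF p hp (fun w => w.2.1) v]
  by_cases hv : 1 ≤ v ∧ v ≤ p
  · rw [if_pos hv]
    have : ((Finset.Icc 1 p).filter (fun i => (Bpt p i).2.1 = v)) =
        {if v = p then 1 else v + 1} := by
      ext i
      simp only [Finset.mem_filter, Finset.mem_Icc, Finset.mem_singleton, Bpt_snd]
      split_ifs <;> omega
    rw [this, Finset.card_singleton]
  · rw [if_neg hv]
    have : ((Finset.Icc 1 p).filter (fun i => (Bpt p i).2.1 = v)) = ∅ := by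
      ext i
      simp only [Finset.mem_filter, Finset.mem_Icc, Finset.notMem_empty, iff_false, Bpt_snd]
      split_ifs <;> omega
    rw [this, Finset.card_empty]

lemma AF_sum_z (v : ℕ) :
    (∑ u : ↥(govDiagram p), if u.1.2.2 = v then AF p u else 0) = cnt p v := by
  rw [sum_indicator_AF p hp (fun w => w.2.2) v]
  unfold cnt
  by_cases hv2 : v = 2
  · rw [if_pos hv2]
    have : ((Finset.Icc 1 p).filter (fun i => (Apt p i).2.2 = v)) = {p - 2, p} := by
      ext i
      simp only [Finset.mem_filter, Finset.mem_Icc, Finset.mem_insert, Finset.mem_singleton,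
        Apt_thd]
      split_ifs <;> omega
    rw [this, Finset.card_insert_of_notMem (by rw [Finset.mem_singleton]; omega),
      Finset.card_singleton]
  · rw [if_neg hv2]
    by_cases hv : 1 ≤ v ∧ v ≤ p - 1
    · rw [if_pos hv]
      have : ((Finset.Icc 1 p).filter (fun i => (Apt p i).2.2 = v)) = {p - v} := by
        ext i
        simp only [Finset.mem_filter, Finset.mem_Icc, Finset.mem_singleton, Apt_thd]
        split_ifs <;> omega
      rw [this, Finset.card_singleton]
    · rw [if_neg hv]
      have : ((Finset.Icc 1 p).filter (fun i => (Apt p i).2.2 = v)) = ∅ := by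
        ext i
        simp only [Finset.mem_filter, Finset.mem_Icc, Finset.notMem_empty, iff_false, Apt_thd]
        split_ifs <;> omega
      rw [this, Finset.card_empty]

lemma BF_sum_z (v : ℕ) :
    (∑ u : ↥(govDiagram p), if u.1.2.2 = v then BF p u else 0) = cnt p v := by
  rw [sum_indicator_BF p hp (fun w => w.2.2) v]
  unfold cnt
  by_cases hv2 : v = 2
  · rw [if_pos hv2]
    have : ((Finset.Icc 1 p).filter (fun i => (Bpt p i).2.2 = v)) = {1, p - 1} := by
      ext i
      simp only [Finset.mem_filter, Finset.mem_Icc, Finset.mem_insert, Finset.mem_singleton,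
        Bpt_thd]
      split_ifs <;> omega
    rw [this, Finset.card_insert_of_notMem (by rw [Finset.mem_singleton]; omega),
      Finset.card_singleton]
  · rw [if_neg hv2]
    by_cases hv : 1 ≤ v ∧ v ≤ p - 1
    · rw [if_pos hv]
      have : ((Finset.Icc 1 p).filter (fun i => (Bpt p i).2.2 = v)) = {p + 1 - v} := by
        ext i
        simp only [Finset.mem_filter, Finset.mem_Icc, Finset.mem_singleton, Bpt_thd]
        split_ifs <;> omega
      rw [this, Finset.card_singleton]
    · rw [if_neg hv]
      have : ((Finset.Icc 1 p).filter (fun i => (Bpt p i).2.2 = v)) = ∅ := by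
        ext i
        simp only [Finset.mem_filter, Finset.mem_Icc, Finset.notMem_empty, iff_false, Bpt_thd]
        split_ifs <;> omega
      rw [this, Finset.card_empty]

lemma muAB : muOf (govDiagram p) (AF p) = muOf (govDiagram p) (BF p) := by
  rw [muOf_eq_iff]
  refine ⟨fun a => ?_, fun a => ?_, fun a => ?_⟩
  · rw [AF_sum_x p hp, BF_sum_x p hp]
  · rw [AF_sum_y p hp, BF_sum_y p hp]
  · rw [AF_sum_z p hp, BF_sum_z p hp]
end Sums

section Facts
open Classical
variable (p : ℕ) (hp : 4 ≤ p)
include hp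

lemma pt12_mem : ((1 : ℕ), (2 : ℕ), p - 1) ∈ govDiagram p := by
  rw [mem_govDiagram hp]
  refine ⟨le_refl 1, by omega, by omega, by omega, by omega, ?_⟩
  unfold Kfun
  rw [if_neg (by omega), if_neg (by omega), Nat.max_eq_right (by omega)]
  omega

lemma AF_ne_BF : AF p ≠ BF p := by
  intro h
  have h1 := AF_apply p ⟨((1 : ℕ), (2 : ℕ), p - 1), pt12_mem p hp⟩
  have h2 := BF_apply p ⟨((1 : ℕ), (2 : ℕ), p - 1), pt12_mem p hp⟩
  rw [h] at h1
  rw [h1] at h2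
  rw [if_pos, if_neg] at h2
  · exact absurd h2 one_ne_zero
  · show ¬((1 : ℕ), (2 : ℕ), p - 1) = Bpt p ((1 : ℕ), (2 : ℕ), p - 1).1
    unfold Bpt
    rw [if_pos rfl]
    intro hc
    have := congrArg (fun w => w.2.1) hc
    dsimp at this
    omega
  · show ((1 : ℕ), (2 : ℕ), p - 1) = Apt p ((1 : ℕ), (2 : ℕ), p - 1).1
    unfold Apt
    rw [if_neg (by dsimp; omega)]

lemma AF_BF_disjoint (u : ↥(govDiagram p)) : AF p u = 0 ∨ BF p u = 0 := by
  rw [AF_apply, BF_apply]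
  by_cases hA : u.1 = Apt p u.1.1
  · by_cases hB : u.1 = Bpt p u.1.1
    · exfalso
      have h := hA.symm.trans hB
      have h2 := congrArg (fun w => w.2.1) h
      rw [Apt_snd, Bpt_snd] at h2
      have hb := coords_bound p u.2 hp
      split_ifs at h2 <;> omega
    · right; rw [if_neg hB]
  · left; rw [if_neg hA]

lemma sum_univ_level (C : ↥(govDiagram p) → ℕ) :
    ∑ u : ↥(govDiagram p), C u =
      ∑ i ∈ Finset.Icc 1 p, ∑ u : ↥(govDiagram p), (if u.1.1 = i then C u else 0) := by
  rw [Finset.sum_comm]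
  apply Finset.sum_congr rfl
  intro u _
  have hb := coords_bound p u.2 hp
  rw [show (∑ i ∈ Finset.Icc 1 p, if u.1.1 = i then C u else 0) =
    if u.1.1 ∈ Finset.Icc 1 p then C u else 0 from Finset.sum_ite_eq _ _ _,
    if_pos (Finset.mem_Icc.2 ⟨hb.1, hb.2.1⟩)]

lemma AF_total : ∑ u : ↥(govDiagram p), AF p u = p := by
  rw [sum_univ_level p hp (fun u => AF p u)]
  rw [Finset.sum_congr rfl (fun i hi => AF_sum_x p hp i)]
  rw [Finset.sum_congr rfl (fun i hi => if_pos (Finset.mem_Icc.1 hi))]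
  rw [Finset.sum_const, Nat.card_Icc, smul_eq_mul, mul_one]
  omega

lemma BF_total : ∑ u : ↥(govDiagram p), BF p u = p := by
  rw [sum_univ_level p hp (fun u => BF p u)]
  rw [Finset.sum_congr rfl (fun i hi => BF_sum_x p hp i)]
  rw [Finset.sum_congr rfl (fun i hi => if_pos (Finset.mem_Icc.1 hi))]
  rw [Finset.sum_const, Nat.card_Icc, smul_eq_mul, mul_one]
  omega

omit hp in
lemma degree_eq_sum_univ {α : Type} [Fintype α] (C : α →₀ ℕ) :
    C.degree = ∑ u : α, C u := by
  rw [Finsupp.degree]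
  exact Finset.sum_subset (Finset.subset_univ _)
    (fun u _ hu => Finsupp.notMem_support_iff.mp hu)

end Facts

section Ker
variable {K : Type} [Field K] {D : Finset (ℕ × ℕ × ℕ)}

lemma ker_fiber_sum (g : MvPolynomial (↥D) K) (hg : toricMap K D g = 0)
    (ν : (↥(xsOf D) ⊕ ↥(ysOf D) ⊕ ↥(zsOf D)) →₀ ℕ) :
    ∑ C ∈ g.support.filter (fun C => muOf D C = ν), MvPolynomial.coeff C g = 0 := by
  classical
  have h1 : (0 : MvPolynomial (↥(xsOf D) ⊕ ↥(ysOf D) ⊕ ↥(zsOf D)) K) =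
      ∑ C ∈ g.support, monomial (muOf D C) (MvPolynomial.coeff C g) := by
    rw [← hg]
    conv_lhs => rw [g.as_sum]
    rw [map_sum]
    exact Finset.sum_congr rfl fun C _ => toricMap_monomial D K C _
  have h2 := congrArg (MvPolynomial.coeff ν) h1
  rw [MvPolynomial.coeff_zero] at h2
  rw [MvPolynomial.coeff_sum] at h2
  rw [Finset.sum_congr rfl (fun C _ => MvPolynomial.coeff_monomial ν (muOf D C)
    (MvPolynomial.coeff C g))] at h2
  rw [← Finset.sum_filter] at h2
  exact h2.symm
end Ker

section Comb
open Finset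

lemma Kfun_cases {p t j k : ℕ} (h : k ≤ Kfun p t j) :
    (t = j ∧ k ≤ p - t) ∨ ((t = 1 ∧ j = p) ∧ k ≤ 2) ∨ ((t = p ∧ j = 1) ∧ k ≤ 2) ∨
      (t ≠ j ∧ ¬(t = 1 ∧ j = p) ∧ ¬(t = p ∧ j = 1) ∧ k ≤ p + 1 - t ∧ k ≤ p + 1 - j) := by
  unfold Kfun at h
  split_ifs at h with h1 h2
  · exact Or.inl ⟨h1, h⟩
  · rcases h2 with h2 | h2
    · exact Or.inr (Or.inl ⟨h2, h⟩)
    · exact Or.inr (Or.inr (Or.inl ⟨h2, h⟩))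
  · refine Or.inr (Or.inr (Or.inr ⟨h1, ?_, ?_, ?_, ?_⟩))
    · tauto
    · tauto
    · rcases Nat.le_total t j with hm | hm
      · rw [Nat.max_eq_right hm] at h; omega
      · rw [Nat.max_eq_left hm] at h; omega
    · rcases Nat.le_total t j with hm | hm
      · rw [Nat.max_eq_right hm] at h; omega
      · rw [Nat.max_eq_left hm] at h; omega

lemma comb_core (p : ℕ) (hp : 4 ≤ p) (y z : ℕ → ℕ)
    (hbnd : ∀ v, 1 ≤ v → v ≤ p → 1 ≤ y v ∧ y v ≤ p ∧ 1 ≤ z v ∧ z v ≤ Kfun p v (y v))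
    (hy : ∀ w, 1 ≤ w → w ≤ p → ((Finset.Icc 1 p).filter (fun v => y v = w)).card = 1)
    (hz : ∀ w, 1 ≤ w → w ≤ p - 1 →
      ((Finset.Icc 1 p).filter (fun v => z v = w)).card = cnt p w) :
    (∀ v, 1 ≤ v → v ≤ p →
        y v = (if v = p then 1 else v + 1) ∧ z v = (if v = p then 2 else p - v)) ∨
    (∀ v, 1 ≤ v → v ≤ p →
        y v = (if v = 1 then p else v - 1) ∧ z v = (if v = 1 then 2 else p + 1 - v)) := by
  have yInj : ∀ v v', 1 ≤ v → v ≤ p → 1 ≤ v' → v' ≤ p → y v = y v' → v = v' := by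
    intro v v' h1 h2 h3 h4 he
    have hw := hbnd v h1 h2
    obtain ⟨a, ha⟩ := Finset.card_eq_one.1 (hy (y v) hw.1 hw.2.1)
    have m1 : v ∈ (Finset.Icc 1 p).filter (fun u => y u = y v) :=
      mem_filter.2 ⟨mem_Icc.2 ⟨h1, h2⟩, rfl⟩
    have m2 : v' ∈ (Finset.Icc 1 p).filter (fun u => y u = y v) :=
      mem_filter.2 ⟨mem_Icc.2 ⟨h3, h4⟩, he.symm⟩
    rw [ha, mem_singleton] at m1 m2
    rw [m1, m2]
  have ySurj : ∀ w, 1 ≤ w → w ≤ p → ∃ v, 1 ≤ v ∧ v ≤ p ∧ y v = w := by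
    intro w h1 h2
    obtain ⟨a, ha⟩ := Finset.card_eq_one.1 (hy w h1 h2)
    have : a ∈ (Finset.Icc 1 p).filter (fun v => y v = w) := by
      rw [ha]; exact mem_singleton_self a
    rw [mem_filter, mem_Icc] at this
    exact ⟨a, this.1.1, this.1.2, this.2⟩
  have zUniq : ∀ w, 1 ≤ w → w ≤ p - 1 → w ≠ 2 →
      ∃ v, (1 ≤ v ∧ v ≤ p ∧ z v = w) ∧
        ∀ v', 1 ≤ v' → v' ≤ p → z v' = w → v' = v := by
    intro w h1 h2 h3
    have hc := hz w h1 h2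
    rw [show cnt p w = 1 by unfold cnt; rw [if_neg h3, if_pos ⟨h1, h2⟩]] at hc
    obtain ⟨a, ha⟩ := Finset.card_eq_one.1 hc
    have hm : a ∈ (Finset.Icc 1 p).filter (fun v => z v = w) := by
      rw [ha]; exact mem_singleton_self a
    rw [mem_filter, mem_Icc] at hm
    refine ⟨a, ⟨hm.1.1, hm.1.2, hm.2⟩, ?_⟩
    intro v' hv1 hv2 hv3
    have : v' ∈ (Finset.Icc 1 p).filter (fun v => z v = w) :=
      mem_filter.2 ⟨mem_Icc.2 ⟨hv1, hv2⟩, hv3⟩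
    rw [ha, mem_singleton] at this
    exact this
  have zTwo : ∃ a b, a ≠ b ∧ (1 ≤ a ∧ a ≤ p ∧ z a = 2) ∧ (1 ≤ b ∧ b ≤ p ∧ z b = 2) ∧
      ∀ v', 1 ≤ v' → v' ≤ p → z v' = 2 → v' = a ∨ v' = b := by
    have hc := hz 2 (by omega) (by omega)
    rw [show cnt p 2 = 2 by unfold cnt; rw [if_pos rfl]] at hc
    obtain ⟨a, b, hab, hab2⟩ := Finset.card_eq_two.1 hc
    have hma : a ∈ (Finset.Icc 1 p).filter (fun v => z v = 2) := by
      rw [hab2]; exact mem_insert_self a _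
    have hmb : b ∈ (Finset.Icc 1 p).filter (fun v => z v = 2) := by
      rw [hab2]; exact mem_insert_of_mem (mem_singleton_self b)
    rw [mem_filter, mem_Icc] at hma hmb
    refine ⟨a, b, hab, ⟨hma.1.1, hma.1.2, hma.2⟩, ⟨hmb.1.1, hmb.1.2, hmb.2⟩, ?_⟩
    intro v' hv1 hv2 hv3
    have : v' ∈ (Finset.Icc 1 p).filter (fun v => z v = 2) :=
      mem_filter.2 ⟨mem_Icc.2 ⟨hv1, hv2⟩, hv3⟩
    rw [hab2, mem_insert, mem_singleton] at this
    exact this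
  -- the position i₀ with y i₀ = p
  obtain ⟨i₀, hi₀1, hi₀p, hyi₀⟩ := ySurj p (by omega) (le_refl p)
  have hi₀nep : i₀ ≠ p := by
    intro h
    subst h
    have hb := hbnd i₀ hi₀1 hi₀p
    rcases Kfun_cases hb.2.2.2 with h' | h' | h' | h' <;> omega
  by_cases hcase : i₀ = 1
  · -- CASE II : y 1 = p, conclusion B
    have hy1 : y 1 = p := by rw [← hcase]; exact hyi₀
    -- base + induction : ∀ t ∈ [2,p-2], y t = t-1 ∧ z t = p+1-t
    have main : ∀ t, 2 ≤ t → t ≤ p - 2 → y t = t - 1 ∧ z t = p + 1 - t := by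
      intro t
      induction t using Nat.strong_induction_on with
      | _ t IH =>
        intro ht2 htp
        obtain ⟨i, ⟨hia, hib, hic⟩, hiu⟩ := zUniq (p + 1 - t) (by omega) (by omega) (by omega)
        have hine1 : i ≠ 1 := by
          intro h
          subst h
          have hb := hbnd 1 (by omega) (by omega)
          rcases Kfun_cases hb.2.2.2 with h' | h' | h' | h' <;> omega
        have hinotlt : ¬(2 ≤ i ∧ i ≤ t - 1) := by
          rintro ⟨h1, h2⟩
          have := (IH i (by omega) h1 (by omega)).2
          omega
        have hb := hbnd i hia hib
        rcases Kfun_cases hb.2.2.2 with h' | h' | h' | h'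
        · -- fixed point : i ≤ t-1, contradiction
          omega
        · exact absurd h'.1.1 hine1
        · omega
        · -- main branch
          obtain ⟨hij, hc1, hc2, hk1, hk2⟩ := h'
          have hit : i = t := by omega
          subst hit
          have hyt : y i ≤ i := by omega
          have hynp : y i ≠ p := by
            intro h
            have := yInj i 1 hia hib (by omega) (by omega) (by rw [h, hy1])
            omega
          have hynotsmall : ¬(y i ≤ i - 2) := by
            intro h
            have hs2 : 2 ≤ y i + 1 := by omega
            have hsp : y i + 1 ≤ p - 2 := by omega
            have := (IH (y i + 1) (by omega) hs2 hsp).1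
            have := yInj i (y i + 1) hia hib (by omega) (by omega) (by omega)
            omega
          exact ⟨by omega, by omega⟩
    -- z p = 1
    have hynp : y p ≠ p := by
      intro h
      have := yInj p i₀ (by omega) (le_refl p) hi₀1 hi₀p (by rw [h, hyi₀])
      omega
    have hyp_ne1 : y p ≠ 1 := by
      intro h
      have h2' := (main 2 (le_refl 2) (by omega)).1
      have := yInj p 2 (by omega) (le_refl p) (by omega) (by omega) (by omega)
      omega
    have hzp : z p = 1 := by
      have hb := hbnd p (by omega) (le_refl p)
      rcases Kfun_cases hb.2.2.2 with h' | h' | h' | h' <;> omega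
    -- y (p-1)
    have hynotmid : ∀ w, 1 ≤ w → w ≤ p → y w ≤ p - 3 → w ≤ p - 2 := by
      intro w hw1 hw2 hys
      by_contra hcon
      have hs2 : 2 ≤ y w + 1 := by
        have := hbnd w hw1 hw2
        omega
      have := (main (y w + 1) hs2 (by omega)).1
      have := yInj w (y w + 1) hw1 hw2 (by omega) (by omega) (by omega)
      omega
    have hyp1' : y (p - 1) = p - 2 := by
      have hb := hbnd (p - 1) (by omega) (by omega)
      have hne_p : y (p - 1) ≠ p := by
        intro h
        have := yInj (p - 1) i₀ (by omega) (by omega) hi₀1 hi₀p (by omega)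
        omega
      have hnot_small : ¬(y (p - 1) ≤ p - 3) := by
        intro h
        have := hynotmid (p - 1) (by omega) (by omega) h
        omega
      have hne_self : y (p - 1) ≠ p - 1 := by
        intro h
        -- fixed point: z (p-1) = 1 = z p, contradiction with uniqueness of value 1
        have hb2 := hbnd (p - 1) (by omega) (by omega)
        rcases Kfun_cases hb2.2.2.2 with h' | h' | h' | h' <;> try omega
        · -- fix branch : z (p-1) ≤ p - (p-1) = 1
          obtain ⟨i1, hi1, hi1u⟩ := zUniq 1 (by omega) (by omega) (by omega)
          have e1 := hi1u (p - 1) (by omega) (by omega) (by omega)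
          have e2 := hi1u p (by omega) (le_refl p) hzp
          omega
      omega
    have hyp2' : y p = p - 1 := by
      have hb := hbnd p (by omega) (le_refl p)
      have hnot_small : ¬(y p ≤ p - 3) := by
        intro h
        have := hynotmid p (by omega) (le_refl p) h
        omega
      have hne2 : y p ≠ p - 2 := by
        intro h
        have := yInj p (p - 1) (by omega) (le_refl p) (by omega) (by omega) (by omega)
        omega
      omega
    -- z (p-1) and z 1
    have hz1_2 : z 1 = 2 ∧ z (p - 1) = 2 := by
      obtain ⟨a, b, hab, ⟨ha1, ha2, ha3⟩, ⟨hb1, hb2, hb3⟩, habu⟩ := zTwo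
      have hrange : ∀ c, 1 ≤ c → c ≤ p → z c = 2 → c = 1 ∨ c = p - 1 := by
        intro c hc1 hc2 hc3
        by_contra hcon
        push_neg at hcon
        have hcm : 2 ≤ c ∧ c ≤ p - 2 ∨ c = p := by omega
        rcases hcm with ⟨hd1, hd2⟩ | rfl
        · have := (main c hd1 hd2).2
          omega
        · omega
      have hra := hrange a ha1 ha2 ha3
      have hrb := hrange b hb1 hb2 hb3
      have h1 : z 1 = 2 := by
        rcases hra with rfl | rfl
        · exact ha3
        · rcases hrb with rfl | rfl
          · exact hb3
          · omega
      have h2 : z (p - 1) = 2 := by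
        rcases hra with rfl | rfl
        · rcases hrb with rfl | rfl
          · omega
          · exact hb3
        · exact ha3
      exact ⟨h1, h2⟩
    right
    intro v hv1 hv2
    by_cases hv_1 : v = 1
    · subst hv_1
      rw [if_pos rfl, if_pos rfl]
      exact ⟨hy1, hz1_2.1⟩
    · rw [if_neg hv_1, if_neg hv_1]
      rcases show (2 ≤ v ∧ v ≤ p - 2) ∨ v = p - 1 ∨ v = p by omega with ⟨h1, h2⟩ | rfl | rfl
      · exact main v h1 h2
      · exact ⟨by omega, by omega⟩
      · exact ⟨by omega, by omega⟩
  · -- CASE I : conclusion A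
    have hzi₀ : z i₀ = 1 := by
      have hb := hbnd i₀ hi₀1 hi₀p
      rcases Kfun_cases hb.2.2.2 with h' | h' | h' | h' <;> omega
    have hyp1 : y p = 1 := by
      by_contra hne
      have hynp : y p ≠ p := by
        intro h
        have := yInj p i₀ (by omega) (le_refl p) hi₀1 hi₀p (by rw [h, hyi₀])
        omega
      have hzp : z p = 1 := by
        have hb := hbnd p (by omega) (le_refl p)
        rcases Kfun_cases hb.2.2.2 with h' | h' | h' | h' <;> omega
      obtain ⟨i1, hi1, hi1u⟩ := zUniq 1 (by omega) (by omega) (by omega)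
      have e1 := hi1u p (by omega) (le_refl p) hzp
      have e2 := hi1u i₀ hi₀1 hi₀p hzi₀
      omega
    have main : ∀ t, 1 ≤ t → t ≤ p - 3 → y t = t + 1 ∧ z t = p - t := by
      intro t
      induction t using Nat.strong_induction_on with
      | _ t IH =>
        intro ht1 htp
        obtain ⟨i, ⟨hia, hib, hic⟩, hiu⟩ := zUniq (p - t) (by omega) (by omega) (by omega)
        have hinep : i ≠ p := by
          intro h
          rw [h] at hic
          have hb := hbnd p (by omega) (le_refl p)
          rcases Kfun_cases hb.2.2.2 with h' | h' | h' | h' <;> omega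
        have hinei₀ : i ≠ i₀ := by
          intro h
          rw [h, hzi₀] at hic
          omega
        have hinotlt : ¬(1 ≤ i ∧ i ≤ t - 1) := by
          rintro ⟨h1, h2⟩
          have := (IH i (by omega) h1 (by omega)).2
          omega
        have hb := hbnd i hia hib
        rcases Kfun_cases hb.2.2.2 with h' | h' | h' | h'
        · -- fixed point : y i = i, z i ≤ p - i, so i = t, y t = t; contradiction by injectivity
          have hit : i = t := by omega
          rw [hit] at h' hic
          by_cases ht_1 : t = 1
          · rw [ht_1] at h'
            have := yInj 1 p (by omega) (by omega) (by omega) (le_refl p)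
              (by rw [← h'.1, hyp1])
            omega
          · have hprev := (IH (t - 1) (by omega) (by omega) (by omega)).1
            have := yInj t (t - 1) (by omega) (by omega) (by omega) (by omega) (by omega)
            omega
        · -- corner (1, p) : y i = p, so i = i₀, contradiction
          have := yInj i i₀ hia hib hi₀1 hi₀p (by omega)
          omega
        · omega
        · obtain ⟨hij, hc1, hc2, hk1, hk2⟩ := h'
          have hynotmid2 : ¬(2 ≤ y i ∧ y i ≤ t) := by
            rintro ⟨h1, h2⟩
            have hprev := (IH (y i - 1) (by omega) (by omega) (by omega)).1
            have := yInj i (y i - 1) hia hib (by omega) (by omega) (by omega)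
            omega
          have hynot1 : y i ≠ 1 := by
            intro h
            have := yInj i p hia hib (by omega) (le_refl p) (by rw [h, hyp1])
            omega
          have hyeq : y i = t + 1 := by omega
          have hieq : i = t := by omega
          constructor
          · rw [← hieq]
            omega
          · rw [← hieq]
            omega
    -- endgame
    have hynotmid : ∀ w, 1 ≤ w → w ≤ p → 2 ≤ y w → y w ≤ p - 2 → w ≤ p - 3 := by
      intro w hw1 hw2 hys1 hys2
      by_contra hcon
      have := (main (y w - 1) (by omega) (by omega)).1
      have := yInj w (y w - 1) hw1 hw2 (by omega) (by omega) (by omega)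
      omega
    have hi₀range : i₀ = p - 2 ∨ i₀ = p - 1 := by
      have : ¬(i₀ ≤ p - 3) := by
        intro h
        have := (main i₀ hi₀1 h).1
        omega
      omega
    have hi₀eq : i₀ = p - 1 := by
      rcases hi₀range with h | h
      · exfalso
        -- then y (p-1) = p - 1, fixed point, z (p-1) = 1 = z i₀
        have hyp1' : y (p - 1) = p - 1 := by
          have hb := hbnd (p - 1) (by omega) (by omega)
          have hne1 : y (p - 1) ≠ 1 := by
            intro h
            have := yInj (p - 1) p (by omega) (by omega) (by omega) (le_refl p)
              (by rw [h, hyp1])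
            omega
          have hnep' : y (p - 1) ≠ p := by
            intro h
            have := yInj (p - 1) i₀ (by omega) (by omega) hi₀1 hi₀p (by omega)
            omega
          have hnotmid : ¬(y (p - 1) ≤ p - 2) := by
            intro h
            have := hynotmid (p - 1) (by omega) (by omega) (by omega) h
            omega
          omega
        have hb := hbnd (p - 1) (by omega) (by omega)
        rcases Kfun_cases hb.2.2.2 with h' | h' | h' | h' <;> try omega
        obtain ⟨i1, hi1, hi1u⟩ := zUniq 1 (by omega) (by omega) (by omega)
        have e1 := hi1u (p - 1) (by omega) (by omega) (by omega)
        have e2 := hi1u i₀ hi₀1 hi₀p hzi₀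
        omega
      · exact h
    subst hi₀eq
    have hyp2' : y (p - 2) = p - 1 := by
      have hb := hbnd (p - 2) (by omega) (by omega)
      have hne1 : y (p - 2) ≠ 1 := by
        intro h
        have := yInj (p - 2) p (by omega) (by omega) (by omega) (le_refl p)
          (by rw [h, hyp1])
        omega
      have hnep' : y (p - 2) ≠ p := by
        intro h
        have := yInj (p - 2) (p - 1) (by omega) (by omega) hi₀1 hi₀p (by omega)
        omega
      have hnotmid : ¬(y (p - 2) ≤ p - 2) := by
        intro h
        have := hynotmid (p - 2) (by omega) (by omega) (by omega) h
        omega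
      omega
    have hz2 : z (p - 2) = 2 ∧ z p = 2 := by
      obtain ⟨a, b, hab, ⟨ha1, ha2, ha3⟩, ⟨hb1, hb2, hb3⟩, habu⟩ := zTwo
      have hrange : ∀ c, 1 ≤ c → c ≤ p → z c = 2 → c = p - 2 ∨ c = p := by
        intro c hc1 hc2 hc3
        by_contra hcon
        push_neg at hcon
        rcases show (1 ≤ c ∧ c ≤ p - 3) ∨ c = p - 1 by omega with ⟨hd1, hd2⟩ | rfl
        · have := (main c hd1 hd2).2
          omega
        · omega
      have hra := hrange a ha1 ha2 ha3
      have hrb := hrange b hb1 hb2 hb3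
      constructor
      · rcases hra with rfl | rfl
        · exact ha3
        · rcases hrb with rfl | rfl
          · exact hb3
          · omega
      · rcases hra with rfl | rfl
        · rcases hrb with rfl | rfl
          · omega
          · exact hb3
        · exact ha3
    left
    intro v hv1 hv2
    by_cases hv_p : v = p
    · subst hv_p
      rw [if_pos rfl, if_pos rfl]
      exact ⟨hyp1, hz2.2⟩
    · rw [if_neg hv_p, if_neg hv_p]
      rcases show (1 ≤ v ∧ v ≤ p - 3) ∨ v = p - 2 ∨ v = p - 1 by omega with ⟨h1, h2⟩ | rfl | rfl
      · exact main v h1 h2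
      · exact ⟨by omega, by omega⟩
      · exact ⟨by omega, by omega⟩
end Comb

section Fiber
open Classical Finset

lemma sum_one_decomp {α : Type} [Fintype α] {P : α → Prop} [DecidablePred P] {g : α → ℕ}
    (h : (∑ u, if P u then g u else 0) = 1) :
    ∃ u₀, P u₀ ∧ g u₀ = 1 ∧ ∀ u, P u → u ≠ u₀ → g u = 0 := by
  classical
  rw [← Finset.sum_filter] at h
  have h1 : ∃ u₀ ∈ Finset.univ.filter (fun u => P u), g u₀ ≠ 0 := by
    by_contra hc
    push_neg at hc
    rw [Finset.sum_eq_zero hc] at h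
    omega
  obtain ⟨u₀, hu₀S, hg⟩ := h1
  have hle : g u₀ ≤ 1 := h ▸ Finset.single_le_sum (fun u _ => Nat.zero_le (g u)) hu₀S
  refine ⟨u₀, (Finset.mem_filter.1 hu₀S).2, by omega, ?_⟩
  intro u hPu hne
  have huS : u ∈ Finset.univ.filter (fun u => P u) :=
    Finset.mem_filter.2 ⟨Finset.mem_univ _, hPu⟩
  have h2 : ∑ x ∈ (Finset.univ.filter (fun u => P u)).erase u₀, g x = 0 := by
    have h3 := Finset.add_sum_erase _ g hu₀S
    omega
  exact Finset.sum_eq_zero_iff.1 h2 u (Finset.mem_erase.2 ⟨hne, huS⟩)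

variable (p : ℕ) (hp : 4 ≤ p)
include hp

lemma x_mem_xsOf {v : ℕ} (h1 : 1 ≤ v) (h2 : v ≤ p) : v ∈ xsOf (govDiagram p) :=
  Finset.mem_image.2 ⟨Apt p v, Apt_mem p hp h1 h2, Apt_fst p v⟩

lemma y_mem_ysOf {v : ℕ} (h1 : 1 ≤ v) (h2 : v ≤ p) : v ∈ ysOf (govDiagram p) := by
  refine Finset.mem_image.2 ⟨((1 : ℕ), v, (1 : ℕ)), ?_, rfl⟩
  rw [mem_govDiagram hp]
  refine ⟨le_refl 1, by omega, h1, h2, le_refl 1, ?_⟩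
  unfold Kfun
  split_ifs with ha hb
  · omega
  · omega
  · rw [Nat.max_eq_right h1]
    omega

lemma z_mem_zsOf {v : ℕ} (h1 : 1 ≤ v) (h2 : v ≤ p - 1) : v ∈ zsOf (govDiagram p) := by
  refine Finset.mem_image.2 ⟨((1 : ℕ), (2 : ℕ), v), ?_, rfl⟩
  rw [mem_govDiagram hp]
  refine ⟨le_refl 1, by omega, by omega, by omega, h1, ?_⟩
  unfold Kfun
  rw [if_neg (by omega), if_neg (by omega), Nat.max_eq_right (by omega)]
  omega

lemma fiber_unique (E : ↥(govDiagram p) →₀ ℕ)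
    (hE : muOf (govDiagram p) E = muOf (govDiagram p) (AF p)) :
    E = AF p ∨ E = BF p := by
  have hEq := (muOf_eq_iff _ _).1 hE
  have hx : ∀ v, 1 ≤ v → v ≤ p →
      (∑ u : ↥(govDiagram p), if u.1.1 = v then E u else 0) = 1 := by
    intro v h1 h2
    have h : (∑ u : ↥(govDiagram p), if u.1.1 = v then E u else 0) =
        ∑ u : ↥(govDiagram p), if u.1.1 = v then AF p u else 0 :=
      hEq.1 ⟨v, x_mem_xsOf p hp h1 h2⟩
    rw [h, AF_sum_x p hp v, if_pos ⟨h1, h2⟩]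
  have hy : ∀ v, 1 ≤ v → v ≤ p →
      (∑ u : ↥(govDiagram p), if u.1.2.1 = v then E u else 0) = 1 := by
    intro v h1 h2
    have h : (∑ u : ↥(govDiagram p), if u.1.2.1 = v then E u else 0) =
        ∑ u : ↥(govDiagram p), if u.1.2.1 = v then AF p u else 0 :=
      hEq.2.1 ⟨v, y_mem_ysOf p hp h1 h2⟩
    rw [h, AF_sum_y p hp v, if_pos ⟨h1, h2⟩]
  have hz : ∀ v, 1 ≤ v → v ≤ p - 1 →
      (∑ u : ↥(govDiagram p), if u.1.2.2 = v then E u else 0) = cnt p v := by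
    intro v h1 h2
    have h : (∑ u : ↥(govDiagram p), if u.1.2.2 = v then E u else 0) =
        ∑ u : ↥(govDiagram p), if u.1.2.2 = v then AF p u else 0 :=
      hEq.2.2 ⟨v, z_mem_zsOf p hp h1 h2⟩
    rw [h, AF_sum_z p hp v]
  -- extract the unique point on each x-level
  have hexists : ∀ v, 1 ≤ v ∧ v ≤ p → ∃ u₀ : ↥(govDiagram p), u₀.1.1 = v ∧ E u₀ = 1 ∧
      ∀ u : ↥(govDiagram p), u.1.1 = v → u ≠ u₀ → E u = 0 := by
    intro v hv
    exact sum_one_decomp (hx v hv.1 hv.2)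
  choose uE hu1 hu2 hu3 using hexists
  set Y : ℕ → ℕ := fun v => if h : 1 ≤ v ∧ v ≤ p then (uE v h).1.2.1 else 0 with hYdef
  set Z : ℕ → ℕ := fun v => if h : 1 ≤ v ∧ v ≤ p then (uE v h).1.2.2 else 0 with hZdef
  have hYv : ∀ v (h : 1 ≤ v ∧ v ≤ p), Y v = (uE v h).1.2.1 := by
    intro v h
    rw [hYdef]
    exact dif_pos h
  have hZv : ∀ v (h : 1 ≤ v ∧ v ≤ p), Z v = (uE v h).1.2.2 := by
    intro v h
    rw [hZdef]
    exact dif_pos h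
  have hcoord : ∀ v (h : 1 ≤ v ∧ v ≤ p), (uE v h).1 = (v, Y v, Z v) := by
    intro v h
    rw [hYv v h, hZv v h]
    exact Prod.ext (hu1 v h) rfl
  -- the level-sum transformation
  have htrans : ∀ (φ : ℕ × ℕ × ℕ → ℕ) (w : ℕ),
      (∑ u : ↥(govDiagram p), if φ u.1 = w then E u else 0) =
        ((Finset.Icc 1 p).filter (fun v => φ (v, Y v, Z v) = w)).card := by
    intro φ w
    rw [Finset.card_filter, sum_univ_level p hp (fun u => if φ u.1 = w then E u else 0)]
    apply Finset.sum_congr rfl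
    intro v hv
    rw [Finset.mem_Icc] at hv
    have key : ∀ u : ↥(govDiagram p),
        (if u.1.1 = v then (if φ u.1 = w then E u else 0) else 0) =
          (if u = uE v hv then (if φ (v, Y v, Z v) = w then 1 else 0) else 0) := by
      intro u
      by_cases h : u = uE v hv
      · subst h
        rw [if_pos (hu1 v hv), if_pos rfl, hu2 v hv, hcoord v hv]
      · rw [if_neg h]
        by_cases hx1 : u.1.1 = v
        · rw [if_pos hx1, hu3 v hv u hx1 h]
          split_ifs <;> rfl
        · rw [if_neg hx1]
    rw [Finset.sum_congr rfl (fun u _ => key u),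
      Finset.sum_ite_eq' Finset.univ (uE v hv) _, if_pos (Finset.mem_univ _)]
  have hbnd' : ∀ v, 1 ≤ v → v ≤ p →
      1 ≤ Y v ∧ Y v ≤ p ∧ 1 ≤ Z v ∧ Z v ≤ Kfun p v (Y v) := by
    intro v h1 h2
    have hmem := (uE v ⟨h1, h2⟩).2
    rw [show (uE v ⟨h1, h2⟩).1 = ((uE v ⟨h1, h2⟩).1.1, (uE v ⟨h1, h2⟩).1.2.1,
      (uE v ⟨h1, h2⟩).1.2.2) from rfl] at hmem
    rw [mem_govDiagram hp] at hmem
    rw [hYv v ⟨h1, h2⟩, hZv v ⟨h1, h2⟩]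
    have he := hu1 v ⟨h1, h2⟩
    rw [he] at hmem
    exact ⟨hmem.2.2.1, hmem.2.2.2.1, hmem.2.2.2.2.1, hmem.2.2.2.2.2⟩
  have hyFact : ∀ w, 1 ≤ w → w ≤ p →
      ((Finset.Icc 1 p).filter (fun v => Y v = w)).card = 1 := by
    intro w h1 h2
    have := htrans (fun t => t.2.1) w
    rw [hy w h1 h2] at this
    exact this.symm
  have hzFact : ∀ w, 1 ≤ w → w ≤ p - 1 →
      ((Finset.Icc 1 p).filter (fun v => Z v = w)).card = cnt p w := by
    intro w h1 h2
    have := htrans (fun t => t.2.2) w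
    rw [hz w h1 h2] at this
    exact this.symm
  rcases comb_core p hp Y Z hbnd' hyFact hzFact with hA | hB
  · left
    apply Finsupp.ext
    intro u
    have hb := coords_bound p u.2 hp
    have h1 : 1 ≤ u.1.1 := hb.1
    have h2 : u.1.1 ≤ p := hb.2.1
    have hApt : (uE u.1.1 ⟨h1, h2⟩).1 = Apt p u.1.1 := by
      rw [hcoord u.1.1 ⟨h1, h2⟩]
      obtain ⟨hA1, hA2⟩ := hA u.1.1 h1 h2
      unfold Apt
      by_cases hvp : u.1.1 = p
      · rw [if_pos hvp] at hA1 hA2 ⊢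
        rw [hA1, hA2, hvp]
      · rw [if_neg hvp] at hA1 hA2 ⊢
        rw [hA1, hA2]
    rw [AF_apply]
    by_cases h : u = uE u.1.1 ⟨h1, h2⟩
    · have hEu : E u = 1 := by rw [h]; exact hu2 u.1.1 ⟨h1, h2⟩
      rw [hEu, if_pos ((congrArg Subtype.val h).trans hApt)]
    · have hEu : E u = 0 := hu3 u.1.1 ⟨h1, h2⟩ u rfl h
      rw [hEu, if_neg (fun hc => h (Subtype.ext (hc.trans hApt.symm)))]
  · right
    apply Finsupp.ext
    intro u
    have hb := coords_bound p u.2 hp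
    have h1 : 1 ≤ u.1.1 := hb.1
    have h2 : u.1.1 ≤ p := hb.2.1
    have hBpt : (uE u.1.1 ⟨h1, h2⟩).1 = Bpt p u.1.1 := by
      rw [hcoord u.1.1 ⟨h1, h2⟩]
      obtain ⟨hB1, hB2⟩ := hB u.1.1 h1 h2
      unfold Bpt
      by_cases hv1 : u.1.1 = 1
      · rw [if_pos hv1] at hB1 hB2 ⊢
        rw [hB1, hB2, hv1]
      · rw [if_neg hv1] at hB1 hB2 ⊢
        rw [hB1, hB2]
    rw [BF_apply]
    by_cases h : u = uE u.1.1 ⟨h1, h2⟩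
    · have hEu : E u = 1 := by rw [h]; exact hu2 u.1.1 ⟨h1, h2⟩
      rw [hEu, if_pos ((congrArg Subtype.val h).trans hBpt)]
    · have hEu : E u = 0 := hu3 u.1.1 ⟨h1, h2⟩ u rfl h
      rw [hEu, if_neg (fun hc => h (Subtype.ext (hc.trans hBpt.symm)))]
end Fiber


section Final
open Classical
variable (K : Type) [Field K] [CharZero K] (p : ℕ) (hp : 4 ≤ p)
include hp

lemma AF_degree : (AF p).degree = p := by
  rw [degree_eq_sum_univ]
  exact AF_total p hp

lemma BF_degree : (BF p).degree = p := by
  rw [degree_eq_sum_univ]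
  exact BF_total p hp

lemma coeff_AF_mul_ker (g r : MvPolynomial (↥(govDiagram p)) K)
    (hg : g ∈ toricIdeal K (govDiagram p)) (d : ℕ) (hd : d < p)
    (hhom : g ∈ MvPolynomial.homogeneousSubmodule (↥(govDiagram p)) K d) :
    MvPolynomial.coeff (AF p) (r * g) = 0 := by
  rw [MvPolynomial.coeff_mul]
  apply Finset.sum_eq_zero
  rintro ⟨m, C⟩ hmc
  rw [Finset.HasAntidiagonal.mem_antidiagonal] at hmc
  dsimp only at hmc
  suffices h : MvPolynomial.coeff C g = 0 by
    dsimp only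
    rw [h, mul_zero]
  by_contra hC
  have hhom' : g.IsHomogeneous d := (mem_homogeneousSubmodule _ _).1 hhom
  have hdeg : C.degree = d := by
    have := hhom' hC
    rw [Finsupp.degree_eq_weight_one]; exact this
  have hdegA : (AF p).degree = p := AF_degree p hp
  have hm0 : m ≠ 0 := by
    intro h0
    rw [h0, zero_add] at hmc
    rw [hmc] at hdeg
    omega
  have hker := ker_fiber_sum g (by rwa [toricIdeal, RingHom.mem_ker] at hg) (muOf (govDiagram p) C)
  have hsingle : g.support.filter (fun C' => muOf (govDiagram p) C' = muOf (govDiagram p) C)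
      = {C} := by
    apply Finset.eq_singleton_iff_unique_mem.2
    refine ⟨Finset.mem_filter.2 ⟨MvPolynomial.mem_support_iff.2 hC, rfl⟩, ?_⟩
    intro C' hC'
    rw [Finset.mem_filter] at hC'
    have hmu : muOf (govDiagram p) (C' + m) = muOf (govDiagram p) (AF p) := by
      rw [muOf_add, hC'.2, ← muOf_add, add_comm C m, hmc]
    rcases fiber_unique p hp (C' + m) hmu with hEq | hEq
    · have : C' + m = C + m := by rw [hEq, ← hmc, add_comm]
      exact add_right_cancel this
    · exfalso
      obtain ⟨u, hu⟩ : ∃ u, m u ≠ 0 := by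
        by_contra hcon
        push_neg at hcon
        exact hm0 (Finsupp.ext hcon)
      have hA : AF p u ≠ 0 := by
        rw [← hmc, Finsupp.add_apply]
        omega
      have hB : BF p u ≠ 0 := by
        rw [← hEq, Finsupp.add_apply]
        omega
      rcases AF_BF_disjoint p hp u with h | h
      · exact hA h
      · exact hB h
  rw [hsingle, Finset.sum_singleton] at hker
  exact hC hker

end Final

/-- For every `p ≥ 4`, the minimal generating set of the toric
ideal `J_D` of the Ferrers diagram generated by the listed extremal points
contains a binomial of degree `p`: there is a homogeneous degree-`p` binomial
in `J_D` which does not lie in the subideal generated by the elements of `J_D`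
of degree less than `p`. -/
theorem toric_ideal_has_degree_p_minimal_binomial
    (K : Type) [Field K] [CharZero K] (p : ℕ) (hp : 4 ≤ p) :
    ∃ f ∈ toricIdeal K (govDiagram p),
      (∃ A B : ↥(govDiagram p) →₀ ℕ, A ≠ B ∧
        f = MvPolynomial.monomial A (1 : K) - MvPolynomial.monomial B (1 : K)) ∧
      f ∈ MvPolynomial.homogeneousSubmodule (↥(govDiagram p)) K p ∧
      f ∉ Ideal.span {g : MvPolynomial (↥(govDiagram p)) K |
        g ∈ toricIdeal K (govDiagram p) ∧
          ∃ d : ℕ, d < p ∧ g ∈ MvPolynomial.homogeneousSubmodule (↥(govDiagram p)) K d} := by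
  refine ⟨monomial (AF p) (1 : K) - monomial (BF p) (1 : K), ?_,
    ⟨AF p, BF p, AF_ne_BF p hp, rfl⟩, ?_, ?_⟩
  · rw [toricIdeal, RingHom.mem_ker]
    rw [map_sub]
    rw [show (toricMap K (govDiagram p)) (monomial (AF p) (1 : K)) =
      monomial (muOf (govDiagram p) (AF p)) (1 : K) from toricMap_monomial _ K _ _]
    rw [show (toricMap K (govDiagram p)) (monomial (BF p) (1 : K)) =
      monomial (muOf (govDiagram p) (BF p)) (1 : K) from toricMap_monomial _ K _ _]
    rw [muAB p hp, sub_self]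
  · exact Submodule.sub_mem _
      ((mem_homogeneousSubmodule _ _).2 (isHomogeneous_monomial _ (AF_degree p hp)))
      ((mem_homogeneousSubmodule _ _).2 (isHomogeneous_monomial _ (BF_degree p hp)))
  · intro hmem
    have key : ∀ x ∈ Ideal.span {g : MvPolynomial (↥(govDiagram p)) K |
        g ∈ toricIdeal K (govDiagram p) ∧
          ∃ d : ℕ, d < p ∧ g ∈ MvPolynomial.homogeneousSubmodule (↥(govDiagram p)) K d},
        ∀ r, MvPolynomial.coeff (AF p) (r * x) = 0 := by
      intro x hx
      refine Submodule.span_induction ?_ ?_ ?_ ?_ hx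
      · rintro g ⟨hgJ, d, hd, hhom⟩ r
        exact coeff_AF_mul_ker K p hp g r hgJ d hd hhom
      · intro r
        rw [mul_zero, MvPolynomial.coeff_zero]
      · intro a b ha hb iha ihb r
        rw [mul_add, MvPolynomial.coeff_add, iha r, ihb r, add_zero]
      · intro c a ha iha r
        rw [smul_eq_mul, ← mul_assoc]
        exact iha (r * c)
    have h0 := key _ hmem 1
    rw [one_mul, MvPolynomial.coeff_sub, MvPolynomial.coeff_monomial,
      MvPolynomial.coeff_monomial, if_pos rfl,
      if_neg (fun hc => AF_ne_BF p hp hc.symm), sub_zero] at h0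
    exact one_ne_zero h0

end
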